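/- Let f be a slice function on the quaternionic slice-ball 𝔹 ⊂ ℍⁿ whose restriction to 𝔹_I maps into ℂ_I^n for some imaginary unit I, and suppose ‖z‖/(1+‖z‖) ≤ ‖f_I(z)‖ ≤ ‖z‖/(1-‖z‖) for all z ∈ 𝔹_I (the growth bound for convex mappings). Then ‖x‖/(1+‖x‖) ≤ ‖f(x)‖ ≤ ‖x‖/(1-‖x‖) for all x ∈ 𝔹. -/

import Mathlib

open Finset Quaternion

-- pure-unit components from q^2 = -1
lemma unitQ' {q : Quaternion ℝ} (h : q ^ 2 = -1) :
    q.re = 0 ∧ q.imI ^ 2 + q.imJ ^ 2 + q.imK ^ 2 = 1 := by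
  have h1 : (q * q).re = (-1 : Quaternion ℝ).re := by rw [← sq, h]
  have h2 : (q * q).imI = (-1 : Quaternion ℝ).imI := by rw [← sq, h]
  have h3 : (q * q).imJ = (-1 : Quaternion ℝ).imJ := by rw [← sq, h]
  have h4 : (q * q).imK = (-1 : Quaternion ℝ).imK := by rw [← sq, h]
  simp [Quaternion.re_mul, Quaternion.imI_mul, Quaternion.imJ_mul, Quaternion.imK_mul] at h1 h2 h3 h4
  have hre : q.re = 0 := by
    by_contra hne
    have hi : q.imI = 0 :=
      ((mul_eq_zero.mp (by linear_combination h2/2 : q.re * q.imI = 0)).resolve_left hne)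
    have hj : q.imJ = 0 :=
      ((mul_eq_zero.mp (by linear_combination h3/2 : q.re * q.imJ = 0)).resolve_left hne)
    have hk : q.imK = 0 :=
      ((mul_eq_zero.mp (by linear_combination h4/2 : q.re * q.imK = 0)).resolve_left hne)
    nlinarith [h1, sq_nonneg q.re]
  exact ⟨hre, by nlinarith [h1]⟩

lemma keyQ (I J : Quaternion ℝ)
    (hIre : I.re = 0) (hI1 : I.imI ^ 2 + I.imJ ^ 2 + I.imK ^ 2 = 1)
    (hJre : J.re = 0) (hJ1 : J.imI ^ 2 + J.imJ ^ 2 + J.imK ^ 2 = 1)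
    (a b c d : ℝ) :
    ‖(a : Quaternion ℝ) + (b : Quaternion ℝ) * I + J * ((c : Quaternion ℝ) + (d : Quaternion ℝ) * I)‖ ^ 2
      = (1 - (I * J).re) / 2 *
          ‖(a : Quaternion ℝ) + (b : Quaternion ℝ) * I + I * ((c : Quaternion ℝ) + (d : Quaternion ℝ) * I)‖ ^ 2
        + (1 + (I * J).re) / 2 *
          ‖(a : Quaternion ℝ) + (b : Quaternion ℝ) * I - I * ((c : Quaternion ℝ) + (d : Quaternion ℝ) * I)‖ ^ 2 := by
  have hn : ∀ q : Quaternion ℝ, ‖q‖ ^ 2 = normSq q := fun q => by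
    rw [sq, ← Quaternion.normSq_eq_norm_mul_self]
  simp only [hn, Quaternion.normSq_def', Quaternion.re_mul, Quaternion.imI_mul,
    Quaternion.imJ_mul, Quaternion.imK_mul, Quaternion.re_add, Quaternion.imI_add,
    Quaternion.imJ_add, Quaternion.imK_add, Quaternion.re_sub, Quaternion.imI_sub,
    Quaternion.imJ_sub, Quaternion.imK_sub, Quaternion.re_coe, Quaternion.imI_coe,
    Quaternion.imJ_coe, Quaternion.imK_coe, hIre, hJre]
  ring_nf
  linear_combination (c^2 + d^2*(I.imI^2+I.imJ^2+I.imK^2)) * hJ1 +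
    (-(c^2 + d^2*(I.imI^2+I.imJ^2+I.imK^2)) -
      2*(I.imI*J.imI + I.imJ*J.imJ + I.imK*J.imK)*(b*c - a*d)) * hI1

lemma normx (J : Quaternion ℝ) (hJre : J.re = 0)
    (hJ1 : J.imI ^ 2 + J.imJ ^ 2 + J.imK ^ 2 = 1) (a b : ℝ) :
    ‖(a : Quaternion ℝ) + J * (b : Quaternion ℝ)‖ ^ 2 = a ^ 2 + b ^ 2 := by
  rw [sq, ← Quaternion.normSq_eq_norm_mul_self]
  simp only [Quaternion.normSq_def', Quaternion.re_mul, Quaternion.imI_mul,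
    Quaternion.imJ_mul, Quaternion.imK_mul, Quaternion.re_add, Quaternion.imI_add,
    Quaternion.imJ_add, Quaternion.imK_add, Quaternion.re_coe, Quaternion.imI_coe,
    Quaternion.imJ_coe, Quaternion.imK_coe, hJre]
  nlinarith [hJ1]

-- |(I*J).re| ≤ 1
lemma reIJ_bound (I J : Quaternion ℝ)
    (hIre : I.re = 0) (hI1 : I.imI ^ 2 + I.imJ ^ 2 + I.imK ^ 2 = 1)
    (hJre : J.re = 0) (hJ1 : J.imI ^ 2 + J.imJ ^ 2 + J.imK ^ 2 = 1) :
    -1 ≤ (I * J).re ∧ (I * J).re ≤ 1 := by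
  simp only [Quaternion.re_mul, hIre, hJre]
  constructor
  · nlinarith [sq_nonneg (I.imI - J.imI), sq_nonneg (I.imJ - J.imJ), sq_nonneg (I.imK - J.imK), hI1, hJ1]
  · nlinarith [sq_nonneg (I.imI + J.imI), sq_nonneg (I.imJ + J.imJ), sq_nonneg (I.imK + J.imK), hI1, hJ1]

set_option maxHeartbeats 1000000 in

/-- growth theorem, convex case: Let `f` be a slice function on the
slice-ball `𝔹 ⊂ ℍⁿ` (induced by an even-odd stem pair over the unit ball `D ⊂ ℂⁿ`) whose
restriction to `𝔹_I` maps into `ℂ_I^n` for some imaginary unit `I`, and suppose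
`‖z‖/(1+‖z‖) ≤ ‖f_I(z)‖ ≤ ‖z‖/(1-‖z‖)` on `𝔹_I`. Then
`‖x‖/(1+‖x‖) ≤ ‖f(x)‖ ≤ ‖x‖/(1-‖x‖)` for all `x = α + Jβ ∈ 𝔹`. -/
theorem stmt11 (n : ℕ)
    (D : Set (Fin n → ℂ)) (hDdef : D = {z | ∑ t, ‖z t‖ ^ 2 < 1})
    (F₁ F₂ : (Fin n → ℂ) → (Fin n → Quaternion ℝ))
    (heven : ∀ z ∈ D, F₁ (fun t => (starRingEnd ℂ) (z t)) = F₁ z)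
    (hodd : ∀ z ∈ D, F₂ (fun t => (starRingEnd ℂ) (z t)) = -F₂ z)
    (f : Quaternion ℝ → (Fin n → ℂ) → (Fin n → Quaternion ℝ))
    (hf : ∀ (L : Quaternion ℝ) (z : Fin n → ℂ) (t : Fin n),
      f L z t = F₁ z t + L * F₂ z t)
    (I : Quaternion ℝ) (hI : I ^ 2 = -1)
    (hrange : ∀ z ∈ D, ∀ t,
      (∃ x y : ℝ, F₁ z t = (x : Quaternion ℝ) + (y : Quaternion ℝ) * I) ∧
      (∃ x y : ℝ, F₂ z t = (x : Quaternion ℝ) + (y : Quaternion ℝ) * I))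
    (hgrowth : ∀ z ∈ D,
      Real.sqrt (∑ t, ‖z t‖ ^ 2)
          / (1 + Real.sqrt (∑ t, ‖z t‖ ^ 2))
        ≤ Real.sqrt (∑ t, ‖f I z t‖ ^ 2) ∧
      Real.sqrt (∑ t, ‖f I z t‖ ^ 2)
        ≤ Real.sqrt (∑ t, ‖z t‖ ^ 2)
          / (1 - Real.sqrt (∑ t, ‖z t‖ ^ 2))) :
    ∀ (J : Quaternion ℝ), J ^ 2 = -1 → ∀ (α β : Fin n → ℝ),
      (fun t => (α t : ℂ) + (β t : ℂ) * Complex.I) ∈ D →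
      Real.sqrt (∑ t, ‖(α t : Quaternion ℝ) + J * (β t : Quaternion ℝ)‖ ^ 2)
          / (1 + Real.sqrt (∑ t, ‖(α t : Quaternion ℝ) + J * (β t : Quaternion ℝ)‖ ^ 2))
        ≤ Real.sqrt (∑ t, ‖f J (fun t => (α t : ℂ) + (β t : ℂ) * Complex.I) t‖ ^ 2) ∧
      Real.sqrt (∑ t, ‖f J (fun t => (α t : ℂ) + (β t : ℂ) * Complex.I) t‖ ^ 2)
        ≤ Real.sqrt (∑ t, ‖(α t : Quaternion ℝ) + J * (β t : Quaternion ℝ)‖ ^ 2)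
          / (1 - Real.sqrt (∑ t, ‖(α t : Quaternion ℝ) + J * (β t : Quaternion ℝ)‖ ^ 2)) := by
  intro J hJ α β hzD
  obtain ⟨hIre, hI1⟩ := unitQ' hI
  obtain ⟨hJre, hJ1⟩ := unitQ' hJ
  set z : Fin n → ℂ := fun t => (α t : ℂ) + (β t : ℂ) * Complex.I with hz
  set zb : Fin n → ℂ := fun t => (starRingEnd ℂ) (z t) with hzbdef
  have habs : ∀ t, ‖zb t‖ ^ 2 = ‖z t‖ ^ 2 := fun t => by
    simp [hzbdef, Complex.norm_conj]
  have habs_sum : ∑ t, ‖zb t‖ ^ 2 = ∑ t, ‖z t‖ ^ 2 :=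
    Finset.sum_congr rfl fun t _ => habs t
  have hzD' : ∑ t, ‖z t‖ ^ 2 < 1 := by
    have h := hzD; rw [hDdef] at h; exact h
  have hzbD : zb ∈ D := by
    rw [hDdef]
    show ∑ t, ‖zb t‖ ^ 2 < 1
    rw [habs_sum]; exact hzD'
  -- ‖x‖ = ‖z‖ componentwise
  have hxz : ∀ t : Fin n,
      ‖(α t : Quaternion ℝ) + J * (β t : Quaternion ℝ)‖ ^ 2 = ‖z t‖ ^ 2 := by
    intro t
    rw [normx J hJre hJ1, Complex.sq_norm, hz]
    exact (Complex.normSq_add_mul_I (α t) (β t)).symm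
  have hsum : ∑ t, ‖(α t : Quaternion ℝ) + J * (β t : Quaternion ℝ)‖ ^ 2
      = ∑ t, ‖z t‖ ^ 2 := Finset.sum_congr rfl fun t _ => hxz t
  -- pointwise key identity
  have hkey : ∀ t, ‖f J z t‖ ^ 2
      = (1 - (I * J).re) / 2 * ‖f I z t‖ ^ 2 + (1 + (I * J).re) / 2 * ‖f I zb t‖ ^ 2 := by
    intro t
    obtain ⟨⟨x1, y1, e1⟩, ⟨x2, y2, e2⟩⟩ := hrange z hzD t
    have hF1b : F₁ zb = F₁ z := heven z hzD
    have hF2b : F₂ zb = -F₂ z := hodd z hzD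
    have h1 : f J z t = (x1 : Quaternion ℝ) + (y1 : Quaternion ℝ) * I
        + J * ((x2 : Quaternion ℝ) + (y2 : Quaternion ℝ) * I) := by rw [hf, e1, e2]
    have h2 : f I z t = (x1 : Quaternion ℝ) + (y1 : Quaternion ℝ) * I
        + I * ((x2 : Quaternion ℝ) + (y2 : Quaternion ℝ) * I) := by rw [hf, e1, e2]
    have h3 : f I zb t = (x1 : Quaternion ℝ) + (y1 : Quaternion ℝ) * I
        - I * ((x2 : Quaternion ℝ) + (y2 : Quaternion ℝ) * I) := by
      rw [hf, hF1b, hF2b]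
      simp only [Pi.neg_apply]
      rw [e1, e2, mul_neg, ← sub_eq_add_neg]
    rw [h1, h2, h3]
    exact keyQ I J hIre hI1 hJre hJ1 x1 y1 x2 y2
  have hCsum : ∑ t, ‖f J z t‖ ^ 2
      = (1 - (I * J).re) / 2 * ∑ t, ‖f I z t‖ ^ 2
        + (1 + (I * J).re) / 2 * ∑ t, ‖f I zb t‖ ^ 2 := by
    rw [Finset.mul_sum, Finset.mul_sum, ← Finset.sum_add_distrib]
    exact Finset.sum_congr rfl fun t _ => hkey t
  -- numeric part
  obtain ⟨hp1, hp2⟩ := reIJ_bound I J hIre hI1 hJre hJ1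
  set A2 := ∑ t, ‖f I z t‖ ^ 2 with hA2
  set B2 := ∑ t, ‖f I zb t‖ ^ 2 with hB2
  have hA2n : 0 ≤ A2 := Finset.sum_nonneg fun t _ => sq_nonneg _
  have hB2n : 0 ≤ B2 := Finset.sum_nonneg fun t _ => sq_nonneg _
  set r := Real.sqrt (∑ t, ‖z t‖ ^ 2) with hrdef
  have hrn : 0 ≤ r := Real.sqrt_nonneg _
  have hSn : 0 ≤ ∑ t, ‖z t‖ ^ 2 := Finset.sum_nonneg fun t _ => sq_nonneg _
  have hr2 : r ^ 2 = ∑ t, ‖z t‖ ^ 2 := Real.sq_sqrt hSn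
  have hrlt : r < 1 := by nlinarith [hzD', hr2, hrn]
  have hA := hgrowth z hzD
  have hB := hgrowth zb hzbD
  rw [habs_sum] at hB
  obtain ⟨hA1, hA3⟩ := hA
  obtain ⟨hB1, hB3⟩ := hB
  have hlo : (0:ℝ) ≤ r / (1 + r) := div_nonneg hrn (by linarith)
  have hhi : (0:ℝ) ≤ r / (1 - r) := div_nonneg hrn (by linarith)
  have hsA : Real.sqrt A2 ^ 2 = A2 := Real.sq_sqrt hA2n
  have hsB : Real.sqrt B2 ^ 2 = B2 := Real.sq_sqrt hB2n
  have hAlo : (r / (1 + r)) ^ 2 ≤ A2 := by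
    nlinarith [mul_self_le_mul_self hlo hA1, hsA]
  have hBlo : (r / (1 + r)) ^ 2 ≤ B2 := by
    nlinarith [mul_self_le_mul_self hlo hB1, hsB]
  have hAhi : A2 ≤ (r / (1 - r)) ^ 2 := by
    nlinarith [mul_self_le_mul_self (Real.sqrt_nonneg A2) hA3, hsA]
  have hBhi : B2 ≤ (r / (1 - r)) ^ 2 := by
    nlinarith [mul_self_le_mul_self (Real.sqrt_nonneg B2) hB3, hsB]
  have hClo : (r / (1 + r)) ^ 2 ≤ ∑ t, ‖f J z t‖ ^ 2 := by
    rw [hCsum]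
    nlinarith [mul_le_mul_of_nonneg_left hAlo (by linarith : (0:ℝ) ≤ (1 - (I*J).re)/2),
      mul_le_mul_of_nonneg_left hBlo (by linarith : (0:ℝ) ≤ (1 + (I*J).re)/2)]
  have hChi : ∑ t, ‖f J z t‖ ^ 2 ≤ (r / (1 - r)) ^ 2 := by
    rw [hCsum]
    nlinarith [mul_le_mul_of_nonneg_left hAhi (by linarith : (0:ℝ) ≤ (1 - (I*J).re)/2),
      mul_le_mul_of_nonneg_left hBhi (by linarith : (0:ℝ) ≤ (1 + (I*J).re)/2)]
  rw [hsum]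
  constructor
  · calc r / (1 + r) = Real.sqrt ((r / (1 + r)) ^ 2) := (Real.sqrt_sq hlo).symm
      _ ≤ Real.sqrt (∑ t, ‖f J z t‖ ^ 2) := Real.sqrt_le_sqrt hClo
  · calc Real.sqrt (∑ t, ‖f J z t‖ ^ 2) ≤ Real.sqrt ((r / (1 - r)) ^ 2) :=
        Real.sqrt_le_sqrt hChi
      _ = r / (1 - r) := Real.sqrt_sq hhi
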